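/- Let Z ⊂ ℝ^d be nonempty compact convex, let r : Z → ℝ be differentiable and convex with Bregman divergence V_z(z') := r(z') − r(z) − ⟨∇r(z), z' − z⟩, and set Γ := max_{z, z' ∈ Z} (r(z) − r(z')). Let g : Z → ℝ^d be monotone, let ε > 0, and let z^0 ∈ Z be a minimizer of r over Z. Suppose K ≥ 1, α_1, …, α_K > 0, and z^1, …, z^K ∈ Z satisfy, for every k ∈ {1,…,K} and all u ∈ Z: ⟨g(z^k), z^k − u⟩ ≤ α_k·[V_{z^{k−1}}(u) − V_{z^k}(u) − V_{z^{k−1}}(z^k)] + ε. If S := Σ_{k=1}^K α_k⁻¹ ≥ Γ/ε, then for all u ∈ Z: (1/S)·Σ_{k=1}^K α_k⁻¹ ⟨g(z^k), z^k − u⟩ ≤ (1/S)·(Γ − Σ_{k=1}^K V_{z^{k−1}}(z^k)) + ε ≤ 2ε. -/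

import Mathlib

open RealInnerProductSpace
open Filter

lemma dirDeriv {d : ℕ} {r : EuclideanSpace ℝ (Fin d) → ℝ}
    {G x : EuclideanSpace ℝ (Fin d)} (h : HasGradientAt r G x)
    (v : EuclideanSpace ℝ (Fin d)) :
    Tendsto (fun t : ℝ => (r (x + t • v) - r x) / t) (nhdsWithin 0 (Set.Ioi 0)) (nhds ⟪G, v⟫) := by
  have hF : HasFDerivAt r (InnerProductSpace.toDual ℝ _ G) x :=
    hasGradientAt_iff_hasFDerivAt.1 h
  have hline : HasDerivAt (fun t : ℝ => x + t • v) v 0 := by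
    simpa using ((hasDerivAt_id (0:ℝ)).smul_const v).const_add x
  have hx0 : x + (0:ℝ) • v = x := by simp
  have hF' : HasFDerivAt r (InnerProductSpace.toDual ℝ _ G) ((fun t : ℝ => x + t • v) 0) := by
    simpa [hx0] using hF
  have hφ : HasDerivAt (fun t : ℝ => r (x + t • v)) ⟪G, v⟫ 0 := by
    have := hF'.comp_hasDerivAt (0:ℝ) hline
    simpa [InnerProductSpace.toDual_apply_apply, Function.comp_def] using this
  have h2 := (hasDerivAt_iff_tendsto_slope.1 hφ).mono_left
    (nhdsWithin_mono 0 (fun t ht => ne_of_gt ht))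
  refine h2.congr' ?_
  filter_upwards [self_mem_nhdsWithin] with t ht
  simp only [slope_def_field, hx0, sub_zero]

/-- Gradient inequality for a convex function: `⟪∇r(x), y − x⟫ ≤ r(y) − r(x)`. -/
lemma grad_ineq {d : ℕ} {Z : Set (EuclideanSpace ℝ (Fin d))}
    {r : EuclideanSpace ℝ (Fin d) → ℝ} (hrconv : ConvexOn ℝ Z r)
    {G x y : EuclideanSpace ℝ (Fin d)} (h : HasGradientAt r G x)
    (hx : x ∈ Z) (hy : y ∈ Z) : ⟪G, y - x⟫ ≤ r y - r x := by
  refine le_of_tendsto (dirDeriv h (y - x)) ?_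
  filter_upwards [Ioc_mem_nhdsGT_of_mem (Set.left_mem_Ico.2 one_pos)] with t ht
  have hcomb : x + t • (y - x) = (1 - t) • x + t • y := by
    rw [smul_sub, sub_smul, one_smul]; abel
  have hmem : r (x + t • (y - x)) ≤ (1 - t) * r x + t * r y := by
    rw [hcomb]
    exact hrconv.2 hx hy (by linarith [ht.2]) ht.1.le (by ring)
  rw [div_le_iff₀ ht.1]
  nlinarith [ht.1]

/-- First-order optimality: if `x` minimizes `r` on convex `Z`, then `0 ≤ ⟪∇r(x), y − x⟫`. -/
lemma foc {d : ℕ} {Z : Set (EuclideanSpace ℝ (Fin d))} (hZconv : Convex ℝ Z)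
    {r : EuclideanSpace ℝ (Fin d) → ℝ}
    {G x y : EuclideanSpace ℝ (Fin d)} (h : HasGradientAt r G x)
    (hx : x ∈ Z) (hy : y ∈ Z) (hmin : ∀ z ∈ Z, r x ≤ r z) :
    0 ≤ ⟪G, y - x⟫ := by
  refine ge_of_tendsto (dirDeriv h (y - x)) ?_
  filter_upwards [Ioc_mem_nhdsGT_of_mem (Set.left_mem_Ico.2 one_pos)] with t ht
  have hcomb : x + t • (y - x) = (1 - t) • x + t • y := by
    rw [smul_sub, sub_smul, one_smul]; abel
  have hmem : x + t • (y - x) ∈ Z := by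
    rw [hcomb]; exact hZconv hx hy (by linarith [ht.2]) ht.1.le (by ring)
  have := hmin _ hmem
  exact div_nonneg (by linarith) ht.1.le


/-- Bregman divergence `V_z(z') = r(z') − r(z) − ⟨∇r(z), z' − z⟩` of a differentiable
function `r` with gradient map `gr`. -/
noncomputable def breg {d : ℕ} (r : EuclideanSpace ℝ (Fin d) → ℝ)
    (gr : EuclideanSpace ℝ (Fin d) → EuclideanSpace ℝ (Fin d))
    (z z' : EuclideanSpace ℝ (Fin d)) : ℝ :=
  r z' - r z - ⟪gr z, z' - z⟫

/-- Correctness of the proximal point method with a dynamic approximate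
proximal oracle of accuracy `ε`: if `z^0` minimizes `r` over `Z`, the iterates satisfy
the per-iteration variational inequalities, and `S = Σ αₖ⁻¹ ≥ Γ/ε` with
`Γ = max_{z,z'∈Z}(r(z) − r(z'))`, then the weighted regret is at most `2ε`. -/
theorem stmt15 {d : ℕ} (Z : Set (EuclideanSpace ℝ (Fin d)))
    (hZne : Z.Nonempty) (hZcomp : IsCompact Z) (hZconv : Convex ℝ Z)
    (r : EuclideanSpace ℝ (Fin d) → ℝ)
    (gr : EuclideanSpace ℝ (Fin d) → EuclideanSpace ℝ (Fin d))
    (hgr : ∀ z ∈ Z, HasGradientAt r (gr z) z)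
    (hrconv : ConvexOn ℝ Z r)
    (g : EuclideanSpace ℝ (Fin d) → EuclideanSpace ℝ (Fin d))
    (hmono : ∀ z ∈ Z, ∀ z' ∈ Z, 0 ≤ ⟪g z' - g z, z' - z⟫)
    (ε : ℝ) (hε : 0 < ε)
    (K : ℕ) (hK : 1 ≤ K)
    (zs : ℕ → EuclideanSpace ℝ (Fin d)) (α : ℕ → ℝ)
    (hz0mem : zs 0 ∈ Z) (hz0min : ∀ z ∈ Z, r (zs 0) ≤ r z)
    (hmem : ∀ k ∈ Finset.Icc 1 K, zs k ∈ Z)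
    (hα : ∀ k ∈ Finset.Icc 1 K, 0 < α k)
    (hvar : ∀ k ∈ Finset.Icc 1 K, ∀ u ∈ Z,
      ⟪g (zs k), zs k - u⟫
        ≤ α k * (breg r gr (zs (k - 1)) u - breg r gr (zs k) u
            - breg r gr (zs (k - 1)) (zs k)) + ε)
    (Γ S : ℝ)
    (hΓ : Γ = sSup ((fun p : EuclideanSpace ℝ (Fin d) × EuclideanSpace ℝ (Fin d) =>
      r p.1 - r p.2) '' (Z ×ˢ Z)))
    (hSdef : S = ∑ k ∈ Finset.Icc 1 K, (α k)⁻¹)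
    (hS : Γ / ε ≤ S) :
    ∀ u ∈ Z,
      S⁻¹ * ∑ k ∈ Finset.Icc 1 K, (α k)⁻¹ * ⟪g (zs k), zs k - u⟫
          ≤ S⁻¹ * (Γ - ∑ k ∈ Finset.Icc 1 K, breg r gr (zs (k - 1)) (zs k)) + ε
        ∧ S⁻¹ * (Γ - ∑ k ∈ Finset.Icc 1 K, breg r gr (zs (k - 1)) (zs k)) + ε ≤ 2 * ε := by
  intro u hu
  have hKmem : K ∈ Finset.Icc 1 K := Finset.mem_Icc.2 ⟨hK, le_refl K⟩
  have hmem' : ∀ k ∈ Finset.Icc 1 K, zs (k - 1) ∈ Z := by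
    intro k hk
    obtain ⟨h1, h2⟩ := Finset.mem_Icc.1 hk
    rcases eq_or_lt_of_le h1 with h | h
    · simp only [← h]; exact hz0mem
    · exact hmem _ (Finset.mem_Icc.2 ⟨by omega, by omega⟩)
  have hSpos : 0 < S := by
    rw [hSdef]
    exact Finset.sum_pos (fun k hk => inv_pos.2 (hα k hk)) ⟨K, hKmem⟩
  -- Γ bounds differences of r over Z
  have hΓle : ∀ a ∈ Z, ∀ b ∈ Z, r a - r b ≤ Γ := by
    have hcont : ContinuousOn
        (fun p : EuclideanSpace ℝ (Fin d) × EuclideanSpace ℝ (Fin d) => r p.1 - r p.2)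
        (Z ×ˢ Z) := by
      intro p hp
      exact (((hgr _ hp.1).continuousAt.comp continuous_fst.continuousAt).sub
        ((hgr _ hp.2).continuousAt.comp continuous_snd.continuousAt)).continuousWithinAt
    have hbdd := ((hZcomp.prod hZcomp).image_of_continuousOn hcont).bddAbove
    intro a ha b hb
    rw [hΓ]
    exact le_csSup hbdd ⟨(a, b), ⟨ha, hb⟩, rfl⟩
  -- nonnegativity of Bregman divergences between points of Z
  have hbreg_nonneg : ∀ x ∈ Z, ∀ y ∈ Z, 0 ≤ breg r gr x y := by
    intro x hx y hy
    have := grad_ineq hrconv (hgr x hx) hx hy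
    unfold breg; linarith
  have hB_nonneg : 0 ≤ ∑ k ∈ Finset.Icc 1 K, breg r gr (zs (k - 1)) (zs k) :=
    Finset.sum_nonneg fun k hk => hbreg_nonneg _ (hmem' k hk) _ (hmem k hk)
  -- V 0 ≤ Γ
  have hV0 : breg r gr (zs 0) u ≤ Γ := by
    have hfoc := foc hZconv (hgr _ hz0mem) hz0mem hu hz0min
    have := hΓle u hu (zs 0) hz0mem
    unfold breg; linarith
  have hVK : 0 ≤ breg r gr (zs K) u := hbreg_nonneg _ (hmem K hKmem) u hu
  -- per-iteration inequality divided by α k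
  have hterm : ∀ k ∈ Finset.Icc 1 K, (α k)⁻¹ * ⟪g (zs k), zs k - u⟫
      ≤ (breg r gr (zs (k - 1)) u - breg r gr (zs k) u) - breg r gr (zs (k - 1)) (zs k)
        + (α k)⁻¹ * ε := by
    intro k hk
    have hαk := hα k hk
    have h := hvar k hk u hu
    have h2 := mul_le_mul_of_nonneg_left h (inv_nonneg.2 hαk.le)
    rw [mul_add, inv_mul_cancel_left₀ hαk.ne'] at h2
    linarith
  -- telescoping
  have htel : ∑ k ∈ Finset.Icc 1 K, (breg r gr (zs (k - 1)) u - breg r gr (zs k) u)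
      = breg r gr (zs 0) u - breg r gr (zs K) u := by
    rw [← Finset.Ico_add_one_right_eq_Icc, Finset.sum_Ico_eq_sum_range]
    have := Finset.sum_range_sub' (f := fun k => breg r gr (zs k) u) K
    simp only [Nat.add_sub_cancel] at this ⊢
    rw [← this]
    apply Finset.sum_congr rfl
    intro k _
    rw [add_comm 1 k, Nat.add_sub_cancel]
  have hsum : ∑ k ∈ Finset.Icc 1 K, (α k)⁻¹ * ⟪g (zs k), zs k - u⟫
      ≤ Γ - ∑ k ∈ Finset.Icc 1 K, breg r gr (zs (k - 1)) (zs k) + S * ε := by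
    calc ∑ k ∈ Finset.Icc 1 K, (α k)⁻¹ * ⟪g (zs k), zs k - u⟫
        ≤ ∑ k ∈ Finset.Icc 1 K,
            ((breg r gr (zs (k - 1)) u - breg r gr (zs k) u)
              - breg r gr (zs (k - 1)) (zs k) + (α k)⁻¹ * ε) :=
          Finset.sum_le_sum hterm
      _ = (breg r gr (zs 0) u - breg r gr (zs K) u)
            - (∑ k ∈ Finset.Icc 1 K, breg r gr (zs (k - 1)) (zs k)) + S * ε := by
          rw [Finset.sum_add_distrib, Finset.sum_sub_distrib, htel, ← Finset.sum_mul, ← hSdef]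
      _ ≤ Γ - ∑ k ∈ Finset.Icc 1 K, breg r gr (zs (k - 1)) (zs k) + S * ε := by linarith
  have hΓSε : Γ ≤ S * ε := by
    rw [div_le_iff₀ hε] at hS
    linarith
  constructor
  · have := mul_le_mul_of_nonneg_left hsum (inv_nonneg.2 hSpos.le)
    calc S⁻¹ * ∑ k ∈ Finset.Icc 1 K, (α k)⁻¹ * ⟪g (zs k), zs k - u⟫
        ≤ S⁻¹ * (Γ - ∑ k ∈ Finset.Icc 1 K, breg r gr (zs (k - 1)) (zs k) + S * ε) := this
      _ = S⁻¹ * (Γ - ∑ k ∈ Finset.Icc 1 K, breg r gr (zs (k - 1)) (zs k)) + ε := by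
          rw [mul_add, inv_mul_cancel_left₀ hSpos.ne']
  · have h1 : Γ - ∑ k ∈ Finset.Icc 1 K, breg r gr (zs (k - 1)) (zs k) ≤ S * ε := by linarith
    have h2 := mul_le_mul_of_nonneg_left h1 (inv_nonneg.2 hSpos.le)
    rw [inv_mul_cancel_left₀ hSpos.ne'] at h2
    linarith
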